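/- There is no weakly-regular C^{1M} Chebyshev ps-front on a nonempty open set: if D ⊆ ℝ² is a nonempty open set, f : D → ℝ³ is a weakly-regular C^{1M} Chebyshev ps-front with weakly harmonic map N, then it is impossible that N_xy = 0 identically on D (equivalently, the harmonicity factor h cannot vanish identically on any nonempty open subset of D). -/

import Mathlib

noncomputable section

open Real Set

abbrev E3 : Type := EuclideanSpace ℝ (Fin 3)

/-- Partial derivative in the `x`-direction. -/
noncomputable def pdx {E : Type*} [NormedAddCommGroup E] [NormedSpace ℝ E]
    (f : ℝ × ℝ → E) (p : ℝ × ℝ) : E := lineDeriv ℝ f p ((1 : ℝ), (0 : ℝ))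

/-- Partial derivative in the `y`-direction. -/
noncomputable def pdy {E : Type*} [NormedAddCommGroup E] [NormedSpace ℝ E]
    (f : ℝ × ℝ → E) (p : ℝ × ℝ) : E := lineDeriv ℝ f p ((0 : ℝ), (1 : ℝ))

/-- `f` is C¹ on `D`, and the mixed second partials `∂y∂x f` and `∂x∂y f`
exist at every point of `D`, are continuous on `D`, and agree on `D`. -/
def C1M {E : Type*} [NormedAddCommGroup E] [NormedSpace ℝ E]
    (D : Set (ℝ × ℝ)) (f : ℝ × ℝ → E) : Prop :=
  ContDiffOn ℝ 1 f D ∧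
  (∀ p ∈ D, LineDifferentiableAt ℝ (pdx f) p ((0 : ℝ), (1 : ℝ))) ∧
  (∀ p ∈ D, LineDifferentiableAt ℝ (pdy f) p ((1 : ℝ), (0 : ℝ))) ∧
  ContinuousOn (pdy (pdx f)) D ∧
  ContinuousOn (pdx (pdy f)) D ∧
  (∀ p ∈ D, pdy (pdx f) p = pdx (pdy f) p)

/-- The cross product on ℝ³. -/
noncomputable def cross3 (a b : E3) : E3 :=
  (WithLp.equiv 2 (Fin 3 → ℝ)).symm
    ![a 1 * b 2 - a 2 * b 1, a 2 * b 0 - a 0 * b 2, a 0 * b 1 - a 1 * b 0]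

/-- The Euclidean inner product on ℝ³. -/
noncomputable def dot (a b : E3) : ℝ := inner ℝ a b

/-- `N : D → S²` is weakly harmonic: it is C^{1M}, weakly regular, takes values in the
unit sphere, and `N_xy = N_yx = h • N` for some scalar function `h`. -/
def WeakHarmonic (D : Set (ℝ × ℝ)) (N : ℝ × ℝ → E3) : Prop :=
  C1M D N ∧ (∀ p ∈ D, ‖N p‖ = 1) ∧
  (∀ p ∈ D, pdx N p ≠ 0 ∧ pdy N p ≠ 0) ∧
  ∃ h : ℝ × ℝ → ℝ, ∀ p ∈ D, pdy (pdx N) p = h p • N p ∧ pdx (pdy N) p = h p • N p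

/-- A weakly-regular C^{1M} ps-front with associated weakly harmonic map `N`. -/
def PsFront (D : Set (ℝ × ℝ)) (f N : ℝ × ℝ → E3) : Prop :=
  C1M D f ∧ (∀ p ∈ D, pdx f p ≠ 0 ∧ pdy f p ≠ 0) ∧
  WeakHarmonic D N ∧
  ∀ p ∈ D, pdx f p = cross3 (N p) (pdx N p) ∧ pdy f p = -cross3 (N p) (pdy N p)


section Helpers

lemma cross3_apply0 (a b : E3) : cross3 a b 0 = a 1 * b 2 - a 2 * b 1 := rfl
lemma cross3_apply1 (a b : E3) : cross3 a b 1 = a 2 * b 0 - a 0 * b 2 := rfl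
lemma cross3_apply2 (a b : E3) : cross3 a b 2 = a 0 * b 1 - a 1 * b 0 := rfl

lemma dot_eq (a b : E3) : dot a b = a 0 * b 0 + a 1 * b 1 + a 2 * b 2 := by
  simp [dot, PiLp.inner_apply, RCLike.inner_apply, Fin.sum_univ_three, mul_comm]

lemma e3_ext {a b : E3} (h0 : a 0 = b 0) (h1 : a 1 = b 1) (h2 : a 2 = b 2) : a = b := by
  apply PiLp.ext; intro i
  fin_cases i <;> assumption

lemma smul_apply' (c : ℝ) (a : E3) (i : Fin 3) : (c • a) i = c * a i := rfl
lemma sub_apply' (a b : E3) (i : Fin 3) : (a - b) i = a i - b i := rfl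

-- BAC-CAB
lemma bac_cab (a x y : E3) :
    cross3 a (cross3 x y) = (dot a y) • x - (dot a x) • y := by
  apply e3_ext <;>
    simp only [cross3_apply0, cross3_apply1, cross3_apply2, sub_apply', smul_apply', dot_eq] <;>
    ring

lemma dot_cross3_self (x y : E3) :
    dot (cross3 x y) (cross3 x y) = dot x x * dot y y - (dot x y) ^ 2 := by
  simp only [cross3_apply0, cross3_apply1, cross3_apply2, dot_eq]; ring

lemma cross3_neg (a b : E3) : cross3 a b = - cross3 b a := by
  apply e3_ext <;> simp only [cross3_apply0, cross3_apply1, cross3_apply2] <;>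
    simp only [PiLp.neg_apply, cross3_apply0, cross3_apply1, cross3_apply2] <;> ring

lemma cross3_sub (a b c : E3) : cross3 a (b - c) = cross3 a b - cross3 a c := by
  apply e3_ext <;>
    simp only [cross3_apply0, cross3_apply1, cross3_apply2, sub_apply'] <;> ring

lemma cross3_sub_left (a b c : E3) : cross3 (a - b) c = cross3 a c - cross3 b c := by
  apply e3_ext <;>
    simp only [cross3_apply0, cross3_apply1, cross3_apply2, sub_apply'] <;> ring

lemma dot_comm (a b : E3) : dot a b = dot b a := by simp only [dot_eq]; ring
lemma dot_self_eq (a : E3) : dot a a = ‖a‖ ^ 2 := real_inner_self_eq_norm_sq a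

/-- If `a ⊥ x`, `a ⊥ y`, with `x,y` orthonormal, then `a = (a·(x×y)) • (x×y)`. -/
lemma expand_normal {a x y : E3} (hax : dot a x = 0) (hay : dot a y = 0)
    (hxy : dot x y = 0) (hx : dot x x = 1) (hy : dot y y = 1) :
    a = (dot a (cross3 x y)) • cross3 x y := by
  set c := cross3 x y with hc
  have hcc : dot c c = 1 := by rw [hc, dot_cross3_self, hx, hy, hxy]; ring
  have hac : cross3 a c = 0 := by
    rw [hc, bac_cab, hay, hax]; simp
  have h3 : cross3 c (0 : E3) = 0 := by
    apply e3_ext <;> simp [cross3_apply0, cross3_apply1, cross3_apply2]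
  have h2 := bac_cab c a c
  rw [hac, h3, hcc, one_smul] at h2
  rw [dot_comm, ← sub_eq_zero]
  exact h2.symm

/-- If `w × v = 0`, `w·v = 0`, `v ≠ 0` then `w = 0`. -/
lemma perp_parallel_zero {w v : E3} (h1 : cross3 w v = 0) (h2 : dot w v = 0)
    (hv : v ≠ 0) : w = 0 := by
  have hwv : cross3 v w = 0 := by rw [cross3_neg, h1]; simp
  have h30 : cross3 v (0:E3) = 0 := by
    apply e3_ext <;> simp [cross3_apply0, cross3_apply1, cross3_apply2]
  have h3 := bac_cab v v w
  rw [hwv, h30, dot_comm v w, h2, zero_smul, zero_sub] at h3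
  have hvv : dot v v ≠ 0 := by
    rw [dot_self_eq]
    exact pow_ne_zero 2 (norm_ne_zero_iff.mpr hv)
  have h4 : (dot v v) • w = 0 := by rw [← neg_eq_zero, ← h3]
  exact (smul_eq_zero.mp h4).resolve_left hvv

section Analytic
variable {E : Type*} [NormedAddCommGroup E] [NormedSpace ℝ E]

/-- x-slice derivative from differentiability. -/
lemma hasDerivAt_slice_x {g : ℝ × ℝ → E} {x y : ℝ}
    (h : DifferentiableAt ℝ g (x, y)) :
    HasDerivAt (fun s => g (s, y)) (pdx g (x, y)) x := by
  have hline : HasDerivAt (fun s => g (s, y)) (fderiv ℝ g (x, y) (1, 0)) x := by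
    have hpair : HasDerivAt (fun s : ℝ => (s, y)) ((1 : ℝ), (0 : ℝ)) x :=
      (hasDerivAt_id x).prodMk (hasDerivAt_const x y)
    exact h.hasFDerivAt.comp_hasDerivAt x hpair
  rw [pdx, h.lineDeriv_eq_fderiv]
  exact hline

lemma hasDerivAt_slice_y {g : ℝ × ℝ → E} {x y : ℝ}
    (h : DifferentiableAt ℝ g (x, y)) :
    HasDerivAt (fun s => g (x, s)) (pdy g (x, y)) y := by
  have hline : HasDerivAt (fun s => g (x, s)) (fderiv ℝ g (x, y) (0, 1)) y := by
    have hpair : HasDerivAt (fun s : ℝ => (x, s)) ((0 : ℝ), (1 : ℝ)) y :=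
      (hasDerivAt_const y x).prodMk (hasDerivAt_id y)
    exact h.hasFDerivAt.comp_hasDerivAt y hpair
  rw [pdy, h.lineDeriv_eq_fderiv]
  exact hline

/-- y-slice derivative of `g` from line differentiability in direction `(0,1)`. -/
lemma hasDerivAt_slice_y_of_line {g : ℝ × ℝ → E} {x y : ℝ}
    (h : LineDifferentiableAt ℝ g (x, y) ((0 : ℝ), (1 : ℝ))) :
    HasDerivAt (fun s => g (x, s)) (pdy g (x, y)) y := by
  have hld : HasDerivAt (fun t : ℝ => g ((x, y) + t • ((0:ℝ), (1:ℝ))))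
      (pdy g (x, y)) 0 := h.hasLineDerivAt
  have hsub : HasDerivAt (fun s : ℝ => s - y) 1 y := (hasDerivAt_id y).sub_const y
  have h2 := HasDerivAt.scomp y (by simpa using hld) hsub
  rw [one_smul] at h2
  have heq : (fun s : ℝ => g (x, s)) = ((fun t => g (x, y + t)) ∘ fun s => s - y) := by
    funext s; simp
  rw [heq]; exact h2

lemma hasDerivAt_slice_x_of_line {g : ℝ × ℝ → E} {x y : ℝ}
    (h : LineDifferentiableAt ℝ g (x, y) ((1 : ℝ), (0 : ℝ))) :
    HasDerivAt (fun s => g (s, y)) (pdx g (x, y)) x := by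
  have hld : HasDerivAt (fun t : ℝ => g ((x, y) + t • ((1:ℝ), (0:ℝ))))
      (pdx g (x, y)) 0 := h.hasLineDerivAt
  have hsub : HasDerivAt (fun s : ℝ => s - x) 1 x := (hasDerivAt_id x).sub_const x
  have h2 := HasDerivAt.scomp x (by simpa using hld) hsub
  rw [one_smul] at h2
  have heq : (fun s : ℝ => g (s, y)) = ((fun t => g (x + t, y)) ∘ fun s => s - x) := by
    funext s; simp
  rw [heq]; exact h2

/-- Constancy from vanishing derivative on a convex set. -/
lemma const_of_hasDerivAt_zero {g : ℝ → E} {S : Set ℝ} (hS : Convex ℝ S)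
    (h : ∀ s ∈ S, HasDerivAt g (0 : E) s) {a b : ℝ} (ha : a ∈ S) (hb : b ∈ S) :
    g a = g b := by
  have h0 : ∀ s ∈ S, HasFDerivWithinAt g (0 : ℝ →L[ℝ] E) S s := by
    intro s hs
    have := (h s hs).hasFDerivAt
    have h1 : (ContinuousLinearMap.toSpanSingleton ℝ (0 : E)) = 0 := by
      ext; simp
    rw [h1] at this
    exact this.hasFDerivWithinAt
  have hb0 : ∀ s ∈ S, ‖(0 : ℝ →L[ℝ] E)‖ ≤ (0:ℝ) := fun s _ => by simp
  have := hS.norm_image_sub_le_of_norm_hasFDerivWithin_le h0 hb0 hb ha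
  rw [zero_mul] at this
  have h3 : ‖g a - g b‖ = 0 := le_antisymm this (norm_nonneg _)
  rwa [norm_eq_zero, sub_eq_zero] at h3

/-- If `g` has derivative `d` at `x` and is eventually constant near `x`, then `d = 0`. -/
lemma deriv_zero_of_eventually_const {g : ℝ → E} {d : E} {x : ℝ} {c : E}
    (h : HasDerivAt g d x) (hc : ∀ᶠ s in nhds x, g s = c) : d = 0 := by
  have h2 : HasDerivAt g (0 : E) x :=
    (hasDerivAt_const x c).congr_of_eventuallyEq hc
  exact h.unique h2

end Analytic

/-- Continuity of `cross3` composed with continuous maps. -/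
lemma continuousOn_cross3 {α : Type*} [TopologicalSpace α] {X Y : α → E3} {S : Set α}
    (hX : ContinuousOn X S) (hY : ContinuousOn Y S) :
    ContinuousOn (fun p => cross3 (X p) (Y p)) S := by
  have hcoord : ∀ (Z : α → E3), ContinuousOn Z S → ∀ i : Fin 3,
      ContinuousOn (fun p => Z p i) S := by
    intro Z hZ i
    have h1 : Continuous fun a : E3 => a i :=
      (continuous_apply i).comp (PiLp.continuous_ofLp 2 (fun _ : Fin 3 => ℝ))
    exact h1.comp_continuousOn hZ
  have hsymm : Continuous ((WithLp.equiv 2 (Fin 3 → ℝ)).symm) :=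
    PiLp.continuous_toLp 2 (fun _ : Fin 3 => ℝ)
  apply hsymm.comp_continuousOn
  apply continuousOn_pi.mpr
  intro i
  fin_cases i <;>
    simp only [Matrix.cons_val_zero, Matrix.cons_val_one, Matrix.head_cons,
      Matrix.cons_val_two, Matrix.tail_cons] <;>
  · apply ContinuousOn.sub <;> exact (hcoord X hX _).mul (hcoord Y hY _)

end Helpers


/-- For a weakly-regular C^{1M} Chebyshev ps-front on a nonempty open set `D`, it is
impossible that `N_xy = 0` identically on `D`. -/
theorem stmt_9 (D : Set (ℝ × ℝ)) (hD : IsOpen D) (hne : D.Nonempty)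
    (f N : ℝ × ℝ → E3) (hps : PsFront D f N)
    (hE : ∀ p ∈ D, ‖pdx f p‖ = 1) (hG : ∀ p ∈ D, ‖pdy f p‖ = 1) :
    ¬ (∀ p ∈ D, pdy (pdx N) p = 0) := by
  intro hzero
  obtain ⟨hC1f, hregf, hWH, hcrossf⟩ := hps
  obtain ⟨⟨hC1N, hLDx, hLDy, _, _, hmixN⟩, hunit, hregN, _⟩ := hWH
  obtain ⟨⟨x₀, y₀⟩, hp₀⟩ := hne
  obtain ⟨r, hrpos, hUD⟩ := Metric.isOpen_iff.mp hD _ hp₀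
  set I : Set ℝ := Metric.ball x₀ r with hI
  set J : Set ℝ := Metric.ball y₀ r with hJ
  set U : Set (ℝ × ℝ) := Metric.ball ((x₀, y₀) : ℝ × ℝ) r with hUdef
  have hmem : ∀ a b : ℝ, ((a, b) ∈ U ↔ a ∈ I ∧ b ∈ J) := by
    intro a b
    rw [hUdef, ← ball_prod_same]
    simp [Set.mem_prod, hI, hJ]
  have hx₀I : x₀ ∈ I := Metric.mem_ball_self hrpos
  have hy₀J : y₀ ∈ J := Metric.mem_ball_self hrpos
  have hp₀U : ((x₀, y₀) : ℝ × ℝ) ∈ U := Metric.mem_ball_self hrpos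
  have hdiffN : ∀ p ∈ D, DifferentiableAt ℝ N p := fun p hp =>
    (hC1N.contDiffAt (hD.mem_nhds hp)).differentiableAt one_ne_zero
  have hzero' : ∀ p ∈ D, pdx (pdy N) p = 0 := fun p hp =>
    (hmixN p hp).symm.trans (hzero p hp)
  -- basic inner product identities on D
  have dNN : ∀ p ∈ D, dot (N p) (N p) = 1 := by
    intro p hp; rw [dot_self_eq, hunit p hp]; norm_num
  have hevx : ∀ x y : ℝ, (x, y) ∈ D → ∀ᶠ s in nhds x, (s, y) ∈ D := by
    intro x y hp
    have hc : Continuous fun s : ℝ => ((s, y) : ℝ × ℝ) :=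
      continuous_id.prodMk continuous_const
    have := hc.continuousAt (x := x) |>.preimage_mem_nhds (hD.mem_nhds hp)
    filter_upwards [this] with s hs using hs
  have hevy : ∀ x y : ℝ, (x, y) ∈ D → ∀ᶠ s in nhds y, (x, s) ∈ D := by
    intro x y hp
    have hc : Continuous fun s : ℝ => ((x, s) : ℝ × ℝ) :=
      continuous_const.prodMk continuous_id
    have := hc.continuousAt (x := y) |>.preimage_mem_nhds (hD.mem_nhds hp)
    filter_upwards [this] with s hs using hs
  have dNNx : ∀ p ∈ D, dot (N p) (pdx N p) = 0 := by
    rintro ⟨x, y⟩ hp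
    have hdN := hasDerivAt_slice_x (hdiffN _ hp)
    have hinner := hdN.inner ℝ hdN
    have hev : ∀ᶠ s in nhds x, (inner ℝ (N (s, y)) (N (s, y)) : ℝ) = 1 := by
      filter_upwards [hevx x y hp] with s hs using dNN _ hs
    have h0 := deriv_zero_of_eventually_const hinner hev
    have hcomm := real_inner_comm (N (x, y)) (pdx N (x, y))
    show (inner ℝ (N (x, y)) (pdx N (x, y)) : ℝ) = 0
    linarith
  have dNNy : ∀ p ∈ D, dot (N p) (pdy N p) = 0 := by
    rintro ⟨x, y⟩ hp
    have hdN := hasDerivAt_slice_y (hdiffN _ hp)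
    have hinner := hdN.inner ℝ hdN
    have hev : ∀ᶠ s in nhds y, (inner ℝ (N (x, s)) (N (x, s)) : ℝ) = 1 := by
      filter_upwards [hevy x y hp] with s hs using dNN _ hs
    have h0 := deriv_zero_of_eventually_const hinner hev
    have hcomm := real_inner_comm (N (x, y)) (pdy N (x, y))
    show (inner ℝ (N (x, y)) (pdy N (x, y)) : ℝ) = 0
    linarith
  have dNxNx : ∀ p ∈ D, dot (pdx N p) (pdx N p) = 1 := by
    intro p hp
    have h1 : ‖cross3 (N p) (pdx N p)‖ = 1 := by
      rw [← (hcrossf p hp).1]; exact hE p hp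
    have h2 : dot (cross3 (N p) (pdx N p)) (cross3 (N p) (pdx N p)) = 1 := by
      rw [dot_self_eq, h1]; norm_num
    rw [dot_cross3_self, dNN p hp, dNNx p hp] at h2
    nlinarith [h2]
  have dNyNy : ∀ p ∈ D, dot (pdy N p) (pdy N p) = 1 := by
    intro p hp
    have h1 : ‖cross3 (N p) (pdy N p)‖ = 1 := by
      rw [← norm_neg, ← (hcrossf p hp).2]; exact hG p hp
    have h2 : dot (cross3 (N p) (pdy N p)) (cross3 (N p) (pdy N p)) = 1 := by
      rw [dot_self_eq, h1]; norm_num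
    rw [dot_cross3_self, dNN p hp, dNNy p hp] at h2
    nlinarith [h2]
  have dNxNy : ∀ p ∈ D, dot (pdx N p) (pdy N p) = 0 := by
    rintro ⟨x, y⟩ hp
    have g1 := hasDerivAt_slice_y (hdiffN _ hp)
    have g2 := hasDerivAt_slice_y_of_line (hLDx _ hp)
    rw [hzero _ hp] at g2
    have hinner := g1.inner ℝ g2
    have hev : ∀ᶠ s in nhds y, (inner ℝ (N (x, s)) (pdx N (x, s)) : ℝ) = 0 := by
      filter_upwards [hevy x y hp] with s hs using dNNx _ hs
    have h0 := deriv_zero_of_eventually_const hinner hev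
    rw [inner_zero_right] at h0
    have hcomm := real_inner_comm (pdy N (x, y)) (pdx N (x, y))
    show (inner ℝ (pdx N (x, y)) (pdy N (x, y)) : ℝ) = 0
    linarith
  -- constancy of partials on the rectangle U
  have hconvI : Convex ℝ I := convex_ball x₀ r
  have hconvJ : Convex ℝ J := convex_ball y₀ r
  have hNxconst : ∀ x y y', x ∈ I → y ∈ J → y' ∈ J → pdx N (x, y) = pdx N (x, y') := by
    intro x y y' hx hy hy'
    refine const_of_hasDerivAt_zero (g := fun s => pdx N (x, s)) hconvJ (fun s hs => ?_) hy hy'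
    have hp : ((x, s) : ℝ × ℝ) ∈ D := hUD ((hmem x s).mpr ⟨hx, hs⟩)
    have h1 := hasDerivAt_slice_y_of_line (hLDx _ hp)
    rwa [hzero _ hp] at h1
  have hNyconst : ∀ x x' y, x ∈ I → x' ∈ I → y ∈ J → pdy N (x, y) = pdy N (x', y) := by
    intro x x' y hx hx' hy
    refine const_of_hasDerivAt_zero (g := fun s => pdy N (s, y)) hconvI (fun s hs => ?_) hx hx'
    have hp : ((s, y) : ℝ × ℝ) ∈ D := hUD ((hmem s y).mpr ⟨hs, hy⟩)
    have h1 := hasDerivAt_slice_x_of_line (hLDy _ hp)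
    rwa [hzero' _ hp] at h1
  have hNdiff : ∀ x x' y y', x ∈ I → x' ∈ I → y ∈ J → y' ∈ J →
      N (x, y) - N (x, y') = N (x', y) - N (x', y') := by
    intro x x' y y' hx hx' hy hy'
    refine const_of_hasDerivAt_zero (g := fun s => N (s, y) - N (s, y'))
      hconvI (fun s hs => ?_) hx hx'
    have hp1 : ((s, y) : ℝ × ℝ) ∈ D := hUD ((hmem s y).mpr ⟨hs, hy⟩)
    have hp2 : ((s, y') : ℝ × ℝ) ∈ D := hUD ((hmem s y').mpr ⟨hs, hy'⟩)
    have h3 := (hasDerivAt_slice_x (hdiffN _ hp1)).sub (hasDerivAt_slice_x (hdiffN _ hp2))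
    rwa [hNxconst s y y' hs hy hy', sub_self] at h3
  -- the sign function
  set εf : ℝ × ℝ → ℝ := fun p => dot (N p) (cross3 (pdx N p) (pdy N p)) with hεf
  have hexp : ∀ p ∈ D, N p = εf p • cross3 (pdx N p) (pdy N p) := by
    intro p hp
    exact expand_normal (dNNx p hp) (dNNy p hp) (dNxNy p hp) (dNxNx p hp) (dNyNy p hp)
  have hε2 : ∀ p ∈ D, εf p ^ 2 = 1 := by
    intro p hp
    have h1 := dNN p hp
    have hcc : dot (cross3 (pdx N p) (pdy N p)) (cross3 (pdx N p) (pdy N p)) = 1 := by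
      rw [dot_cross3_self, dNxNx p hp, dNyNy p hp, dNxNy p hp]; ring
    rw [hexp p hp] at h1
    have hcc' : (inner ℝ (cross3 (pdx N p) (pdy N p)) (cross3 (pdx N p) (pdy N p)) : ℝ) = 1 := hcc
    have h1' : εf p * (εf p * (inner ℝ (cross3 (pdx N p) (pdy N p))
        (cross3 (pdx N p) (pdy N p)) : ℝ)) = 1 := by
      rw [← real_inner_smul_right, ← real_inner_smul_left]
      exact h1
    rw [hcc', mul_one] at h1'
    nlinarith [h1']
  -- continuity of the sign function
  have hcontN : ContinuousOn N D := hC1N.continuousOn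
  have hfd : ContinuousOn (fderiv ℝ N) D := hC1N.continuousOn_fderiv_of_isOpen hD le_rfl
  have hcontNx : ContinuousOn (pdx N) D := by
    have h1 : ContinuousOn (fun p => fderiv ℝ N p ((1 : ℝ), (0 : ℝ))) D :=
      (ContinuousLinearMap.apply ℝ E3 ((1 : ℝ), (0 : ℝ))).continuous.comp_continuousOn hfd
    exact h1.congr fun p hp => (hdiffN p hp).lineDeriv_eq_fderiv
  have hcontNy : ContinuousOn (pdy N) D := by
    have h1 : ContinuousOn (fun p => fderiv ℝ N p ((0 : ℝ), (1 : ℝ))) D :=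
      (ContinuousLinearMap.apply ℝ E3 ((0 : ℝ), (1 : ℝ))).continuous.comp_continuousOn hfd
    exact h1.congr fun p hp => (hdiffN p hp).lineDeriv_eq_fderiv
  have hcontε : ContinuousOn εf U :=
    ContinuousOn.inner (hcontN.mono hUD)
      (continuousOn_cross3 (hcontNx.mono hUD) (hcontNy.mono hUD))
  -- the sign is constant on U
  have hsq : ∀ z ∈ U, εf z = 1 ∨ εf z = -1 := by
    intro z hz
    have h2 : (εf z - 1) * (εf z + 1) = 0 := by nlinarith [hε2 z (hUD hz)]
    rcases mul_eq_zero.mp h2 with h | h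
    · left; linarith
    · right; linarith
  have hprec : IsPreconnected U := (convex_ball _ _).isPreconnected
  have hεconst : ∀ p ∈ U, εf p = εf (x₀, y₀) := by
    intro p hp
    by_contra hne'
    have hzero3 : ∃ z ∈ U, εf z = 0 := by
      rcases hsq p hp with hp1 | hp1 <;> rcases hsq _ hp₀U with hq1 | hq1
      · exact absurd (hp1.trans hq1.symm) hne'
      · obtain ⟨z, hz, hz0⟩ := hprec.intermediate_value₂ hp₀U hp
          hcontε (continuousOn_const (c := (0 : ℝ)))
          (by rw [hq1]; norm_num) (by rw [hp1]; norm_num)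
        exact ⟨z, hz, hz0⟩
      · obtain ⟨z, hz, hz0⟩ := hprec.intermediate_value₂ hp hp₀U
          hcontε (continuousOn_const (c := (0 : ℝ)))
          (by rw [hp1]; norm_num) (by rw [hq1]; norm_num)
        exact ⟨z, hz, hz0⟩
      · exact absurd (hp1.trans hq1.symm) hne'
    obtain ⟨z, hz, hz0⟩ := hzero3
    have := hε2 z (hUD hz)
    rw [hz0] at this
    norm_num at this
  set εc := εf (x₀, y₀) with hεc
  have hεc2 : εc ^ 2 = 1 := hε2 _ (hUD hp₀U)
  have hεcne : εc ≠ 0 := by intro h; rw [h] at hεc2; norm_num at hεc2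
  have hNform : ∀ x ∈ I, ∀ y ∈ J,
      N (x, y) = εc • cross3 (pdx N (x, y₀)) (pdy N (x₀, y)) := by
    intro x hx y hy
    have hpU : ((x, y) : ℝ × ℝ) ∈ U := (hmem x y).mpr ⟨hx, hy⟩
    rw [hexp _ (hUD hpU), hεconst _ hpU,
      hNxconst x y y₀ hx hy hy₀J, hNyconst x x₀ y hx hx₀I hy]
  by_cases hBconst : ∀ y ∈ J, pdy N (x₀, y) = pdy N (x₀, y₀)
  · -- second fundamental contradiction with b := N_y(x₀,y₀)
    have hbb : dot (pdy N (x₀, y₀)) (pdy N (x₀, y₀)) = 1 := dNyNy _ (hUD hp₀U)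
    have g1 := hasDerivAt_slice_y (hdiffN _ (hUD hp₀U))
    have hinner := g1.inner ℝ (hasDerivAt_const y₀ (pdy N (x₀, y₀)))
    have hev : ∀ᶠ s in nhds y₀, (inner ℝ (N (x₀, s)) (pdy N (x₀, y₀)) : ℝ) = 0 := by
      have hJn : J ∈ nhds y₀ := Metric.isOpen_ball.mem_nhds hy₀J
      filter_upwards [hJn] with s hs
      rw [← hBconst s hs]
      exact dNNy _ (hUD ((hmem x₀ s).mpr ⟨hx₀I, hs⟩))
    have h0 := deriv_zero_of_eventually_const hinner hev
    rw [inner_zero_right, zero_add] at h0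
    have h1 : (1 : ℝ) = 0 := by rw [← hbb]; exact h0
    norm_num at h1
  · push_neg at hBconst
    obtain ⟨y₁, hy₁J, hBne⟩ := hBconst
    set v := pdy N (x₀, y₁) - pdy N (x₀, y₀) with hv
    have hvne : v ≠ 0 := sub_ne_zero.mpr hBne
    have hAconst : ∀ x ∈ I, pdx N (x, y₀) = pdx N (x₀, y₀) := by
      intro x hx
      have hdd := hNdiff x x₀ y₁ y₀ hx hx₀I hy₁J hy₀J
      rw [hNform x hx y₁ hy₁J, hNform x hx y₀ hy₀J, hNform x₀ hx₀I y₁ hy₁J,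
        hNform x₀ hx₀I y₀ hy₀J, ← smul_sub, ← smul_sub, ← cross3_sub, ← cross3_sub] at hdd
      have hdd2 : cross3 (pdx N (x, y₀)) v = cross3 (pdx N (x₀, y₀)) v :=
        smul_right_injective E3 hεcne hdd
      have hcr : cross3 (pdx N (x, y₀) - pdx N (x₀, y₀)) v = 0 := by
        rw [cross3_sub_left, hdd2, sub_self]
      have hdotv : dot (pdx N (x, y₀) - pdx N (x₀, y₀)) v = 0 := by
        have e1 : dot (pdx N (x, y₀)) (pdy N (x₀, y₁)) = 0 := by
          have h := dNxNy (x, y₁) (hUD ((hmem x y₁).mpr ⟨hx, hy₁J⟩))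
          rwa [hNxconst x y₁ y₀ hx hy₁J hy₀J, hNyconst x x₀ y₁ hx hx₀I hy₁J] at h
        have e2 : dot (pdx N (x, y₀)) (pdy N (x₀, y₀)) = 0 := by
          have h := dNxNy (x, y₀) (hUD ((hmem x y₀).mpr ⟨hx, hy₀J⟩))
          rwa [hNyconst x x₀ y₀ hx hx₀I hy₀J] at h
        have e3 : dot (pdx N (x₀, y₀)) (pdy N (x₀, y₁)) = 0 := by
          have h := dNxNy (x₀, y₁) (hUD ((hmem x₀ y₁).mpr ⟨hx₀I, hy₁J⟩))
          rwa [hNxconst x₀ y₁ y₀ hx₀I hy₁J hy₀J] at h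
        have e4 : dot (pdx N (x₀, y₀)) (pdy N (x₀, y₀)) = 0 :=
          dNxNy (x₀, y₀) (hUD hp₀U)
        have e1' : (inner ℝ (pdx N (x, y₀)) (pdy N (x₀, y₁)) : ℝ) = 0 := e1
        have e2' : (inner ℝ (pdx N (x, y₀)) (pdy N (x₀, y₀)) : ℝ) = 0 := e2
        have e3' : (inner ℝ (pdx N (x₀, y₀)) (pdy N (x₀, y₁)) : ℝ) = 0 := e3
        have e4' : (inner ℝ (pdx N (x₀, y₀)) (pdy N (x₀, y₀)) : ℝ) = 0 := e4
        show (inner ℝ (pdx N (x, y₀) - pdx N (x₀, y₀)) v : ℝ) = 0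
        rw [hv, inner_sub_left, inner_sub_right, inner_sub_right]
        rw [e1', e2', e3', e4']
        ring
      have h5 := perp_parallel_zero hcr hdotv hvne
      exact sub_eq_zero.mp h5
    have haa : dot (pdx N (x₀, y₀)) (pdx N (x₀, y₀)) = 1 := dNxNx _ (hUD hp₀U)
    have g1 := hasDerivAt_slice_x (hdiffN _ (hUD hp₀U))
    have hinner := g1.inner ℝ (hasDerivAt_const x₀ (pdx N (x₀, y₀)))
    have hev : ∀ᶠ s in nhds x₀, (inner ℝ (N (s, y₀)) (pdx N (x₀, y₀)) : ℝ) = 0 := by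
      have hIn : I ∈ nhds x₀ := Metric.isOpen_ball.mem_nhds hx₀I
      filter_upwards [hIn] with s hs
      rw [← hAconst s hs]
      exact dNNx _ (hUD ((hmem s y₀).mpr ⟨hs, hy₀J⟩))
    have h0 := deriv_zero_of_eventually_const hinner hev
    rw [inner_zero_right, zero_add] at h0
    have h1 : (1 : ℝ) = 0 := by rw [← haa]; exact h0
    norm_num at h1

end
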